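/- For 0 < a < b, the integral of 1/(x²·sqrt((b-x)(x-a))) over [a,b] equals (a+b)π/(2(ab)^{3/2}). -/

import Mathlib

set_option linter.unreachableTactic false
set_option linter.unusedTactic false

open Real MeasureTheory intervalIntegral

theorem integral_inv_xsq_div_sqrt (a b : ℝ) (ha : 0 < a) (hab : a < b) :
    ∫ x in a..b, 1 / (x ^ 2 * Real.sqrt ((b - x) * (x - a)))
      = (a + b) * Real.pi / (2 * (a * b) ^ ((3 : ℝ) / 2)) := by
  have hb : 0 < b := ha.trans hab
  have hba : 0 < b - a := sub_pos.2 hab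
  set s : ℝ := Real.sqrt (a * b) with hs_def
  have hs : 0 < s := Real.sqrt_pos.2 (by positivity)
  have hs2 : s ^ 2 = a * b := Real.sq_sqrt (by positivity)
  set F : ℝ → ℝ := fun x => (1 / (a * b)) * (Real.sqrt ((b - x) * (x - a)) / x)
      + ((a + b) / (2 * (a * b) * s)) *
        Real.arcsin (((a + b) * x - 2 * (a * b)) / ((b - a) * x)) with hF_def
  -- integrability
  have hint : IntervalIntegrable
      (fun x => 1 / (x ^ 2 * Real.sqrt ((b - x) * (x - a)))) volume a b := by
    set m : ℝ := (a + b) / 2 with hm_def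
    have ham : a < m := by simp only [hm_def]; linarith
    have hmb : m < b := by simp only [hm_def]; linarith
    have hmeas : ∀ c d : ℝ, AEStronglyMeasurable
        (fun x => 1 / (x ^ 2 * Real.sqrt ((b - x) * (x - a))))
        (volume.restrict (Set.uIoc c d)) := by
      intro c d
      refine (Measurable.aestronglyMeasurable ?_)
      exact (measurable_const.div ((measurable_id.pow_const 2).mul
        (Real.continuous_sqrt.measurable.comp (by fun_prop))))
    have h1 : IntervalIntegrable
        (fun x => 1 / (x ^ 2 * Real.sqrt ((b - x) * (x - a)))) volume a m := by
      have hbase : IntervalIntegrable (fun x : ℝ => (x - a) ^ (-(1/2) : ℝ)) volume a m := by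
        have := (intervalIntegral.intervalIntegrable_rpow' (a := 0) (b := m - a)
          (r := -(1/2)) (by norm_num)).comp_sub_right a
        simpa using this
      refine (hbase.const_mul (1 / (a ^ 2 * Real.sqrt ((b - m)/1)))).mono_fun (hmeas a m) ?_
      rw [Set.uIoc_of_le ham.le]
      filter_upwards [ae_restrict_mem measurableSet_Ioc] with x hx
      obtain ⟨hxa, hxm⟩ := hx
      have hx0 : 0 < x := ha.trans hxa
      have hbm : 0 < b - m := by linarith
      have hbx : 0 < b - x := by linarith
      have hxa' : 0 < x - a := by linarith
      have hr : (x - a) ^ (-(1/2) : ℝ) = 1 / Real.sqrt (x - a) := by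
        rw [Real.rpow_neg hxa'.le, Real.sqrt_eq_rpow]
        norm_num
      have key : 1 / (x ^ 2 * Real.sqrt ((b - x) * (x - a)))
          ≤ 1 / (a ^ 2 * Real.sqrt ((b - m)/1)) * (x - a) ^ (-(1/2) : ℝ) := by
        rw [hr, Real.sqrt_mul hbx.le, div_mul_div_comm, one_mul, div_one]
        rw [show x ^ 2 * (Real.sqrt (b - x) * Real.sqrt (x - a))
            = x ^ 2 * Real.sqrt (b - x) * Real.sqrt (x - a) by ring]
        gcongr
        all_goals first
          | positivity
          | linarith
      simp only [Real.norm_eq_abs]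
      rw [abs_of_nonneg (by positivity), abs_of_nonneg (by positivity)]
      exact key
    have h2 : IntervalIntegrable
        (fun x => 1 / (x ^ 2 * Real.sqrt ((b - x) * (x - a)))) volume m b := by
      have hbase : IntervalIntegrable (fun x : ℝ => (b - x) ^ (-(1/2) : ℝ)) volume m b := by
        have := (intervalIntegral.intervalIntegrable_rpow' (a := 0) (b := b - m)
          (r := -(1/2)) (by norm_num)).comp_sub_left b
        simpa using this.symm
      refine (hbase.const_mul (1 / (a ^ 2 * Real.sqrt ((m - a)/1)))).mono_fun (hmeas m b) ?_
      rw [Set.uIoc_of_le hmb.le]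
      filter_upwards [ae_restrict_mem measurableSet_Ioc] with x hx
      obtain ⟨hxm, hxb⟩ := hx
      have hx0 : 0 < x := ha.trans (ham.trans hxm)
      have hma : 0 < m - a := by linarith
      have hxa' : 0 < x - a := by linarith
      rcases eq_or_lt_of_le hxb with rfl | hbx'
      · simp
      have hbx : 0 < b - x := by linarith
      have hr : (b - x) ^ (-(1/2) : ℝ) = 1 / Real.sqrt (b - x) := by
        rw [Real.rpow_neg hbx.le, Real.sqrt_eq_rpow]
        norm_num
      have key : 1 / (x ^ 2 * Real.sqrt ((b - x) * (x - a)))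
          ≤ 1 / (a ^ 2 * Real.sqrt ((m - a)/1)) * (b - x) ^ (-(1/2) : ℝ) := by
        rw [hr, Real.sqrt_mul hbx.le, div_mul_div_comm, one_mul, div_one]
        rw [show x ^ 2 * (Real.sqrt (b - x) * Real.sqrt (x - a))
            = x ^ 2 * Real.sqrt (x - a) * Real.sqrt (b - x) by ring]
        gcongr
        all_goals first
          | positivity
          | linarith
          | exact Real.sqrt_le_sqrt (by linarith)
      simp only [Real.norm_eq_abs]
      rw [abs_of_nonneg (by positivity), abs_of_nonneg (by positivity)]
      exact key
    exact h1.trans h2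
  -- continuity of F
  have hcont : ContinuousOn F (Set.Icc a b) := by
    have hc1 : ContinuousOn (fun x => Real.sqrt ((b - x) * (x - a)) / x) (Set.Icc a b) :=
      (Real.continuous_sqrt.comp (by continuity)).continuousOn.div continuousOn_id
        (fun x hx => ne_of_gt (lt_of_lt_of_le ha hx.1))
    have hc2 : ContinuousOn
        (fun x => Real.arcsin (((a + b) * x - 2 * (a * b)) / ((b - a) * x))) (Set.Icc a b) := by
      refine Real.continuous_arcsin.comp_continuousOn (ContinuousOn.div (by fun_prop)
        (by fun_prop) (fun x hx => ?_))
      have : 0 < x := lt_of_lt_of_le ha hx.1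
      positivity
    exact (continuousOn_const.mul hc1).add (continuousOn_const.mul hc2)
  -- derivative of F
  have hderiv : ∀ x ∈ Set.Ioo a b,
      HasDerivAt F (1 / (x ^ 2 * Real.sqrt ((b - x) * (x - a)))) x := by
    intro x hx
    obtain ⟨hax, hxb⟩ := hx
    have hx0 : 0 < x := ha.trans hax
    have hbx : 0 < b - x := by linarith
    have hxa : 0 < x - a := by linarith
    have hu : 0 < (b - x) * (x - a) := by positivity
    set W : ℝ := Real.sqrt ((b - x) * (x - a)) with hW_def
    have hW : 0 < W := Real.sqrt_pos.2 hu
    have hW2 : W ^ 2 = (b - x) * (x - a) := Real.sq_sqrt hu.le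
    set Z : ℝ := ((a + b) * x - 2 * (a * b)) / ((b - a) * x) with hZ_def
    have hz1 : 1 - Z ^ 2 = (2 * s * W / ((b - a) * x)) ^ 2 := by
      rw [hZ_def, div_pow, div_pow, eq_div_iff (by positivity)]
      field_simp
      nlinarith [hs2, hW2]
    have hzsq : 0 < 1 - Z ^ 2 := by rw [hz1]; positivity
    have hzne1 : Z ≠ 1 := by intro h; rw [h] at hzsq; norm_num at hzsq
    have hzne1' : Z ≠ -1 := by intro h; rw [h] at hzsq; norm_num at hzsq
    have hsqrt : Real.sqrt (1 - Z ^ 2) = 2 * s * W / ((b - a) * x) := by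
      rw [hz1, Real.sqrt_sq (by positivity)]
    -- derivative of inner polynomial
    have hu' : HasDerivAt (fun x : ℝ => (b - x) * (x - a)) ((a + b) - 2 * x) x := by
      have h := ((hasDerivAt_id x).const_sub b).mul ((hasDerivAt_id x).sub_const a)
      simp only [id_eq] at h
      refine h.congr_deriv ?_; ring
    have hw' : HasDerivAt (fun x => Real.sqrt ((b - x) * (x - a)))
        (1 / (2 * W) * ((a + b) - 2 * x)) x := by
      have := (Real.hasDerivAt_sqrt hu.ne').comp x hu'
      simpa [hW_def, Function.comp_def] using this
    have hwx : HasDerivAt (fun x => Real.sqrt ((b - x) * (x - a)) / x)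
        ((1 / (2 * W) * ((a + b) - 2 * x) * x - W * 1) / x ^ 2) x :=
      hw'.div (hasDerivAt_id x) hx0.ne'
    -- derivative of Z
    have hzden : (b - a) * x ≠ 0 := by positivity
    have hzd : HasDerivAt (fun x => ((a + b) * x - 2 * (a * b)) / ((b - a) * x))
        (((a + b) * ((b - a) * x) - ((a + b) * x - 2 * (a * b)) * (b - a)) / ((b - a) * x) ^ 2)
        x := by
      have h := (((hasDerivAt_id x).const_mul (a + b)).sub_const (2 * (a * b))).div
        ((hasDerivAt_id x).const_mul (b - a)) hzden
      simp only [id_eq, mul_one] at h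
      exact h
    have harc : HasDerivAt (fun x => Real.arcsin (((a + b) * x - 2 * (a * b)) / ((b - a) * x)))
        (1 / Real.sqrt (1 - Z ^ 2) *
          (((a + b) * ((b - a) * x) - ((a + b) * x - 2 * (a * b)) * (b - a)) / ((b - a) * x) ^ 2))
        x := by
      have := (Real.hasDerivAt_arcsin hzne1' hzne1).comp x hzd
      simpa [hZ_def, Function.comp_def] using this
    have htot := ((hwx.const_mul (1 / (a * b))).add
      (harc.const_mul ((a + b) / (2 * (a * b) * s))))
    have hN : (a + b) * ((b - a) * x) - ((a + b) * x - 2 * (a * b)) * (b - a)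
        = 2 * (a * b) * (b - a) := by ring
    have e1 : 1 / (a * b) * ((1 / (2 * W) * (a + b - 2 * x) * x - W * 1) / x ^ 2)
        = (2 * (a * b) - (a + b) * x) / (2 * (a * b) * W * x ^ 2) := by
      field_simp
      linear_combination (-2) * hW2
    have e2 : (a + b) / (2 * (a * b) * s) *
        (1 / (2 * s * W / ((b - a) * x)) * (2 * (a * b) * (b - a) / ((b - a) * x) ^ 2))
        = (a + b) / (2 * (a * b) * W * x) := by
      rw [one_div_div]
      field_simp
      linear_combination (-1) * hs2
    refine htot.congr_deriv ?_
    rw [hsqrt, hN, e1, e2]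
    field_simp
    ring
  rw [integral_eq_sub_of_hasDerivAt_of_le hab.le hcont hderiv hint]
  have hwa : Real.sqrt ((b - a) * (a - a)) = 0 := by simp
  have hwb : Real.sqrt ((b - b) * (b - a)) = 0 := by simp
  have hza : ((a + b) * a - 2 * (a * b)) / ((b - a) * a) = -1 := by
    rw [div_eq_iff (by positivity)]; ring
  have hzb : ((a + b) * b - 2 * (a * b)) / ((b - a) * b) = 1 := by
    rw [div_eq_iff (by positivity)]; ring
  have hpow : (a * b) ^ ((3 : ℝ)/2) = (a * b) * s := by
    rw [show (3:ℝ)/2 = 1 + 1/2 by norm_num, Real.rpow_add (by positivity),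
      Real.rpow_one, hs_def, Real.sqrt_eq_rpow]
  rw [hpow]
  simp only [hF_def, hwa, hwb, hza, hzb, Real.arcsin_one, Real.arcsin_neg_one]
  field_simp
  ring
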